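/- Let F be a field with char F ≠ 2. Any two trees with the same number of vertices have normally isomorphic normal graph algebras over F: there is an F-linear equivalence between the two algebras that preserves the product, maps the vertex-span subspace onto the vertex-span subspace, and maps the edge-span subspace onto the edge-span subspace. -/

import Mathlib

/-- `edgeVal u e` is the sum of the values of `u` at the two endpoints of `e`,
written `λ_e(u)` in the paper. -/
def edgeVal {V F : Type*} [Field F] (u : V → F) : Sym2 V → F :=
  Sym2.lift ⟨fun x y => u x + u y, fun _ _ => add_comm _ _⟩

/-- The product of the normal graph algebra `N G = U_G × Z_G` over `F`. -/
def nmul {V F : Type*} [Field F] (G : SimpleGraph V)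
    (a b : (V → F) × (G.edgeSet → F)) : (V → F) × (G.edgeSet → F) :=
  (0, fun e => edgeVal a.1 (e : Sym2 V) * edgeVal b.1 (e : Sym2 V))

section Aux
variable {V F : Type*} [Field F]

lemma edgeVal_mk (u : V → F) (x y : V) : edgeVal u s(x, y) = u x + u y := rfl

def edgeMap (G : SimpleGraph V) : (V → F) →ₗ[F] (G.edgeSet → F) where
  toFun u e := edgeVal u (e : Sym2 V)
  map_add' u v := by
    funext e
    obtain ⟨e, he⟩ := e
    induction e using Sym2.ind with
    | _ x y => simp [edgeVal_mk]; ring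
  map_smul' c u := by
    funext e
    obtain ⟨e, he⟩ := e
    induction e using Sym2.ind with
    | _ x y => simp [edgeVal_mk]; ring

noncomputable def phiMap (G : SimpleGraph V) (root : V) :
    (V → F) →ₗ[F] F × (G.edgeSet → F) :=
  LinearMap.prod (LinearMap.proj root) (edgeMap G)

lemma phi_inj (G : SimpleGraph V) (hG : G.Connected) (root : V) :
    Function.Injective (phiMap (F := F) G root) := by
  rw [← LinearMap.ker_eq_bot, LinearMap.ker_eq_bot']
  intro u hu
  have h1 : u root = 0 := congrArg Prod.fst hu
  have h2 : ∀ e : G.edgeSet, edgeVal u (e : Sym2 V) = 0 := fun e =>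
    congrFun (congrArg Prod.snd hu) e
  have key : ∀ (v w : V) (p : G.Walk v w), u v = 0 → u w = 0 := by
    intro v w p
    induction p with
    | nil => exact id
    | cons h p ih =>
      intro hv
      apply ih
      have he := h2 ⟨s(_, _), h⟩
      rw [edgeVal_mk, hv] at he
      simpa using he
  funext v
  exact key root v (hG.preconnected root v).some h1

noncomputable def phiEquiv (G : SimpleGraph V) [Fintype V] [Fintype G.edgeSet]
    (hG : G.Connected) (root : V)
    (hc : Fintype.card V = Fintype.card G.edgeSet + 1) :
    (V → F) ≃ₗ[F] F × (G.edgeSet → F) :=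
  LinearEquiv.ofBijective (phiMap G root)
    ⟨phi_inj G hG root, by
      have hfr : Module.finrank F (V → F) = Module.finrank F (F × (G.edgeSet → F)) := by
        simp [Module.finrank_pi, Module.finrank_prod, hc]
        ring
      exact (LinearMap.injective_iff_surjective_of_finrank_eq_finrank hfr).mp (phi_inj G hG root)⟩

lemma phiEquiv_apply (G : SimpleGraph V) [Fintype V] [Fintype G.edgeSet]
    (hG : G.Connected) (root : V) (hc : Fintype.card V = Fintype.card G.edgeSet + 1)
    (u : V → F) :
    phiEquiv G hG root hc u = (u root, fun e : G.edgeSet => edgeVal u (e : Sym2 V)) := rfl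

/-- Reindexing of a function space along an equivalence. -/
def reindexEquiv {α β : Type*} (σ : α ≃ β) : (α → F) ≃ₗ[F] (β → F) where
  toFun z := z ∘ σ.symm
  invFun z := z ∘ σ
  map_add' _ _ := rfl
  map_smul' _ _ := rfl
  left_inv z := by funext a; simp
  right_inv z := by funext b; simp

end Aux

theorem trees_same_order_have_isomorphic_normal_algebras
    {V₁ V₂ F : Type*} [Fintype V₁] [Fintype V₂] [DecidableEq V₁] [DecidableEq V₂]
    [Field F] (hchar2 : ringChar F ≠ 2)
    (G₁ : SimpleGraph V₁) (G₂ : SimpleGraph V₂)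
    (h₁ : G₁.IsTree) (h₂ : G₂.IsTree)
    (hcard : Fintype.card V₁ = Fintype.card V₂) :
    ∃ φ : ((V₁ → F) × (G₁.edgeSet → F)) ≃ₗ[F] ((V₂ → F) × (G₂.edgeSet → F)),
      (∀ a b, φ (nmul G₁ a b) = nmul G₂ (φ a) (φ b)) ∧
      (∀ u : V₁ → F, ∃ u' : V₂ → F, φ (u, 0) = (u', 0)) ∧
      (∀ u' : V₂ → F, ∃ u : V₁ → F, φ (u, 0) = (u', 0)) ∧
      (∀ z : G₁.edgeSet → F, ∃ z' : G₂.edgeSet → F, φ (0, z) = (0, z')) ∧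
      (∀ z' : G₂.edgeSet → F, ∃ z : G₁.edgeSet → F, φ (0, z) = (0, z')) := by
  classical
  letI : Fintype G₁.edgeSet := Fintype.ofFinite _
  letI : Fintype G₂.edgeSet := Fintype.ofFinite _
  haveI : Nonempty V₁ := h₁.isConnected.nonempty
  haveI : Nonempty V₂ := h₂.isConnected.nonempty
  have hc1 : Fintype.card V₁ = Fintype.card G₁.edgeSet + 1 := by
    rw [← SimpleGraph.edgeFinset_card, ← h₁.card_edgeFinset]
  have hc2 : Fintype.card V₂ = Fintype.card G₂.edgeSet + 1 := by
    rw [← SimpleGraph.edgeFinset_card, ← h₂.card_edgeFinset]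
  obtain ⟨root₁⟩ := (inferInstance : Nonempty V₁)
  obtain ⟨root₂⟩ := (inferInstance : Nonempty V₂)
  have hEcard : Fintype.card G₁.edgeSet = Fintype.card G₂.edgeSet := by omega
  set σ : G₁.edgeSet ≃ G₂.edgeSet := Fintype.equivOfCardEq hEcard with hσ
  set B : (G₁.edgeSet → F) ≃ₗ[F] (G₂.edgeSet → F) := reindexEquiv σ with hB
  set Φ₁ := phiEquiv (F := F) G₁ h₁.isConnected root₁ hc1 with hΦ₁
  set Φ₂ := phiEquiv (F := F) G₂ h₂.isConnected root₂ hc2 with hΦ₂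
  set A : (V₁ → F) ≃ₗ[F] (V₂ → F) :=
    Φ₁.trans (((LinearEquiv.refl F F).prodCongr B).trans Φ₂.symm) with hA
  have keyA : ∀ (u : V₁ → F) (e : G₂.edgeSet),
      edgeVal (A u) (e : Sym2 V₂) = edgeVal u ((σ.symm e : G₁.edgeSet) : Sym2 V₁) := by
    intro u e
    have : Φ₂ (A u) = ((LinearEquiv.refl F F).prodCongr B) (Φ₁ u) := by
      simp [hA]
    have h2 := congrFun (congrArg Prod.snd this) e
    simpa [hΦ₁, hΦ₂, phiEquiv_apply, reindexEquiv, hB] using h2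
  refine ⟨A.prodCongr B, ?_, ?_, ?_, ?_, ?_⟩
  · intro a b
    simp only [nmul, LinearEquiv.prodCongr_apply]
    ext e
    · simp
    · simp only [map_zero]
      show B _ e = edgeVal (A a.1) _ * edgeVal (A b.1) _
      rw [keyA, keyA]
      rfl
  · intro u
    exact ⟨A u, by simp⟩
  · intro u'
    exact ⟨A.symm u', by simp⟩
  · intro z
    exact ⟨B z, by simp⟩
  · intro z'
    exact ⟨B.symm z', by simp⟩
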